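/- Let N ∈ ℕ, J = {0,1,…,N−1}, and define K_{λ_1,λ_2,μ_1,μ_2} = F_{λ_2,μ_1} = N^{−1/2} e^{−2πi λ_2 μ_1 / N} (the Fourier matrix entries). Then ‖K ∘ c̃_3‖_{ℓ^{1,∞,1,∞}} = ‖F‖_{ℓ^1} = N^{3/2}, while the operator A on sequences on J × J defined by (Aa)_{λ_1,λ_2} = Σ_{μ_1,μ_2} K_{λ_1,λ_2,μ_1,μ_2} a_{μ_1,μ_2} satisfies ‖A‖_{ℓ^{∞,1} → ℓ^{∞,1}} ≤ N. Consequently there is no constant C independent of the kernel such that ‖K ∘ c̃_3‖_{ℓ^{1,∞,1,∞}} ≤ C‖A‖_{ℓ^{∞,1} → ℓ^{∞,1}} for all kernels. -/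

import Mathlib

noncomputable section

open scoped ENNReal

/-- The `N × N` discrete Fourier matrix `F_{j,k} = N^{-1/2} e^{-2πi jk / N}`. -/
def Fmat (N : ℕ) : Fin N → Fin N → ℂ := fun j k =>
  Complex.exp (-(2 * Real.pi) * Complex.I * ((j.1 : ℂ) * (k.1 : ℂ)) / (N : ℂ)) /
    ((Real.sqrt N : ℝ) : ℂ)

/-- The kernel `K_{λ₁,λ₂,μ₁,μ₂} = F_{λ₂,μ₁}` built from the Fourier matrix. -/
def Kmat (N : ℕ) : Fin N → Fin N → Fin N → Fin N → ℂ := fun _ l2 m1 _ => Fmat N l2 m1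


lemma Fmat_norm (N : ℕ) (j k : Fin N) : ‖Fmat N j k‖ = (Real.sqrt N)⁻¹ := by
  have harg : (-(2 * Real.pi) * Complex.I * ((j.1 : ℂ) * (k.1 : ℂ)) / (N : ℂ)) =
      ((-(2 * Real.pi) * (j.1 * k.1) / N : ℝ) : ℂ) * Complex.I := by
    push_cast; ring
  rw [Fmat, harg, norm_div, Complex.norm_exp_ofReal_mul_I, Complex.norm_real,
    Real.norm_eq_abs, abs_of_nonneg (Real.sqrt_nonneg _), one_div]

lemma Fmat_orth (N : ℕ) (hN : 0 < N) (m m' : Fin N) :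
    ∑ l : Fin N, Fmat N l m * (starRingEnd ℂ) (Fmat N l m') =
      if m = m' then 1 else 0 := by
  have hNc : (N : ℂ) ≠ 0 := Nat.cast_ne_zero.mpr hN.ne'
  set ζ : ℂ := Complex.exp (2 * Real.pi * Complex.I * (((m'.1 : ℕ) : ℂ) - ((m.1 : ℕ) : ℂ)) / N)
    with hζ
  have key : ∀ l : Fin N, Fmat N l m * (starRingEnd ℂ) (Fmat N l m') = ζ ^ (l.1) / N := by
    intro l
    rw [Fmat, Fmat, map_div₀, Complex.conj_ofReal]
    rw [show (starRingEnd ℂ) (Complex.exp (-(2 * Real.pi) * Complex.I *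
          ((l.1 : ℂ) * (m'.1 : ℂ)) / (N : ℂ))) =
        Complex.exp ((2 * Real.pi) * Complex.I * ((l.1 : ℂ) * (m'.1 : ℂ)) / N) by
      rw [← Complex.exp_conj]; congr 1
      simp [map_div₀, map_mul, map_ofNat, Complex.conj_I, Complex.conj_ofReal]
      try ring]
    rw [div_mul_div_comm, ← Complex.exp_add, ← Complex.ofReal_mul,
      Real.mul_self_sqrt (Nat.cast_nonneg N), hζ, ← Complex.exp_nat_mul]
    congr 2
    field_simp
    ring
  simp only [key]
  rw [← Finset.sum_div, Fin.sum_univ_eq_sum_range (fun i => ζ ^ i)]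
  by_cases h : m = m'
  · subst h
    have : ζ = 1 := by rw [hζ]; simp
    simp [this, hNc]
  · rw [if_neg h]
    have hζN : ζ ^ N = 1 := by
      rw [hζ, ← Complex.exp_nat_mul, Complex.exp_eq_one_iff]
      exact ⟨(m'.1 : ℤ) - (m.1 : ℤ), by push_cast; field_simp⟩
    have hζ1 : ζ ≠ 1 := by
      intro hc
      rw [hζ, Complex.exp_eq_one_iff] at hc
      obtain ⟨n, hn⟩ := hc
      have hI : (2 * Real.pi * Complex.I : ℂ) ≠ 0 := by
        simp [Complex.I_ne_zero, Real.pi_ne_zero]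
      have hd : (((m'.1 : ℕ) : ℂ) - ((m.1 : ℕ) : ℂ)) = n * N := by
        field_simp at hn
        have h2 : 2 * (Real.pi : ℂ) * Complex.I * ((((m'.1 : ℕ) : ℂ) - ((m.1 : ℕ) : ℂ))) =
            2 * (Real.pi : ℂ) * Complex.I * (n * N) := by rw [hn]; ring
        exact mul_left_cancel₀ hI h2
      have hd' : ((m'.1 : ℤ) - (m.1 : ℤ)) = n * N := by exact_mod_cast hd
      have h1 : m.1 ≠ m'.1 := fun hh => h (Fin.ext hh)
      have h2 : (m.1 : ℤ) < N := by exact_mod_cast m.2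
      have h3 : (m'.1 : ℤ) < N := by exact_mod_cast m'.2
      have h4 : (0:ℤ) ≤ m.1 := Int.ofNat_nonneg _
      have h5 : (0:ℤ) ≤ m'.1 := Int.ofNat_nonneg _
      rcases lt_trichotomy n 0 with hn0 | hn0 | hn0
      · have : n * N ≤ -N := by
          have : n ≤ -1 := by omega
          nlinarith [Int.ofNat_nonneg N]
        omega
      · subst hn0; simp at hd'; omega
      · have : (N : ℤ) ≤ n * N := by
          have : 1 ≤ n := by omega
          nlinarith [Int.ofNat_nonneg N]
        omega
    rw [geom_sum_eq hζ1, hζN]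
    simp

lemma parseval (N : ℕ) (hN : 0 < N) (b : Fin N → ℂ) :
    ∑ l : Fin N, ‖∑ m : Fin N, Fmat N l m * b m‖ ^ 2 = ∑ m : Fin N, ‖b m‖ ^ 2 := by
  have key : ∑ l : Fin N, (∑ m : Fin N, Fmat N l m * b m) *
      (starRingEnd ℂ) (∑ m : Fin N, Fmat N l m * b m) =
      ∑ m : Fin N, b m * (starRingEnd ℂ) (b m) := by
    calc ∑ l : Fin N, (∑ m : Fin N, Fmat N l m * b m) *
        (starRingEnd ℂ) (∑ m : Fin N, Fmat N l m * b m)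
        = ∑ l : Fin N, ∑ m : Fin N, ∑ m' : Fin N,
            (b m * (starRingEnd ℂ) (b m')) * (Fmat N l m * (starRingEnd ℂ) (Fmat N l m')) := by
          refine Finset.sum_congr rfl fun l _ => ?_
          rw [map_sum, Finset.sum_mul_sum]
          refine Finset.sum_congr rfl fun m _ => Finset.sum_congr rfl fun m' _ => ?_
          rw [map_mul]; ring
      _ = ∑ m : Fin N, ∑ m' : Fin N, (b m * (starRingEnd ℂ) (b m')) *
            ∑ l : Fin N, Fmat N l m * (starRingEnd ℂ) (Fmat N l m') := by
          rw [Finset.sum_comm]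
          refine Finset.sum_congr rfl fun m _ => ?_
          rw [Finset.sum_comm]
          refine Finset.sum_congr rfl fun m' _ => ?_
          rw [Finset.mul_sum]
      _ = ∑ m : Fin N, b m * (starRingEnd ℂ) (b m) := by
          simp only [Fmat_orth N hN]
          simp [Finset.sum_ite_eq]
  have cast1 : ∀ z : ℂ, z * (starRingEnd ℂ) z = ((‖z‖ ^ 2 : ℝ) : ℂ) := fun z => by
    rw [Complex.mul_conj]
    norm_cast
    rw [Complex.normSq_eq_norm_sq]
  simp only [cast1] at key
  rw [← Complex.ofReal_sum, ← Complex.ofReal_sum] at key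
  exact_mod_cast key

lemma l1_bound (N : ℕ) (hN : 0 < N) (b : Fin N → ℂ) (M : ℝ) (hM : ∀ m, ‖b m‖ ≤ M) :
    ∑ l : Fin N, ‖∑ m : Fin N, Fmat N l m * b m‖ ≤ N * M := by
  have hM0 : 0 ≤ M := le_trans (norm_nonneg _) (hM ⟨0, hN⟩)
  set g : Fin N → ℝ := fun l => ‖∑ m : Fin N, Fmat N l m * b m‖ with hg
  have hgnn : 0 ≤ ∑ l, g l := Finset.sum_nonneg fun l _ => norm_nonneg _
  have cs : (∑ l : Fin N, g l) ^ 2 ≤ (N : ℝ) * ∑ l : Fin N, g l ^ 2 := by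
    have := Finset.sum_mul_sq_le_sq_mul_sq Finset.univ (fun _ : Fin N => (1 : ℝ)) g
    simpa [Finset.card_univ] using this
  have hp : ∑ l : Fin N, g l ^ 2 ≤ (N : ℝ) * M ^ 2 := by
    rw [hg]; simp only
    rw [parseval N hN]
    calc ∑ m : Fin N, ‖b m‖ ^ 2 ≤ ∑ _m : Fin N, M ^ 2 :=
          Finset.sum_le_sum fun m _ => pow_le_pow_left₀ (norm_nonneg _) (hM m) 2
      _ = (N : ℝ) * M ^ 2 := by simp [Finset.card_univ, mul_comm]
  have hsq : (∑ l : Fin N, g l) ^ 2 ≤ ((N : ℝ) * M) ^ 2 := by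
    calc (∑ l : Fin N, g l) ^ 2 ≤ (N : ℝ) * ((N : ℝ) * M ^ 2) :=
          cs.trans (mul_le_mul_of_nonneg_left hp (Nat.cast_nonneg N))
      _ = ((N : ℝ) * M) ^ 2 := by ring
  calc ∑ l : Fin N, g l = Real.sqrt ((∑ l : Fin N, g l) ^ 2) := (Real.sqrt_sq hgnn).symm
    _ ≤ Real.sqrt (((N : ℝ) * M) ^ 2) := Real.sqrt_le_sqrt hsq
    _ = (N : ℝ) * M := Real.sqrt_sq (by positivity)

lemma lhs_eval (N : ℕ) (hN : 0 < N) :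
    (⨆ j4 : Fin N, ∑' j3 : Fin N, ⨆ j2 : Fin N, ∑' j1 : Fin N,
        (‖Kmat N j2 j3 j1 j4‖₊ : ℝ≥0∞)) =
      (N : ℝ≥0∞) * ((N : ℝ≥0∞) * ENNReal.ofReal (Real.sqrt N)⁻¹) := by
  haveI : Nonempty (Fin N) := Fin.pos_iff_nonempty.mp hN
  have hc : ∀ j k : Fin N, (‖Fmat N j k‖₊ : ℝ≥0∞) = ENNReal.ofReal (Real.sqrt N)⁻¹ := by
    intro j k
    rw [← ENNReal.ofReal_coe_nnreal, coe_nnnorm, Fmat_norm]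
  simp only [Kmat, hc, tsum_fintype, Finset.sum_const, Finset.card_univ, Fintype.card_fin,
    iSup_const, nsmul_eq_mul]

lemma rhs1_eval (N : ℕ) (hN : 0 < N) :
    (∑' jk : Fin N × Fin N, (‖Fmat N jk.1 jk.2‖₊ : ℝ≥0∞)) =
      (N : ℝ≥0∞) * ((N : ℝ≥0∞) * ENNReal.ofReal (Real.sqrt N)⁻¹) := by
  have hc : ∀ j k : Fin N, (‖Fmat N j k‖₊ : ℝ≥0∞) = ENNReal.ofReal (Real.sqrt N)⁻¹ := by
    intro j k
    rw [← ENNReal.ofReal_coe_nnreal, coe_nnnorm, Fmat_norm]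
  simp only [hc, tsum_fintype, Finset.sum_const, Finset.card_univ, Fintype.card_prod,
    Fintype.card_fin, nsmul_eq_mul, Nat.cast_mul, mul_assoc]

lemma pow_eval (N : ℕ) (hN : 0 < N) :
    (N : ℝ≥0∞) * ((N : ℝ≥0∞) * ENNReal.ofReal (Real.sqrt N)⁻¹) =
      ENNReal.ofReal ((N : ℝ) ^ (3 / 2 : ℝ)) := by
  have hN0 : (0 : ℝ) < N := by exact_mod_cast hN
  have hreal : (N : ℝ) ^ (3 / 2 : ℝ) = (N : ℝ) * ((N : ℝ) * (Real.sqrt N)⁻¹) := by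
    rw [show (3 / 2 : ℝ) = 1 + (1 + -(1 / 2)) by norm_num, Real.rpow_add hN0,
      Real.rpow_add hN0, Real.rpow_one, Real.rpow_neg hN0.le, ← Real.sqrt_eq_rpow]
  rw [hreal, ENNReal.ofReal_mul hN0.le, ENNReal.ofReal_mul hN0.le, ENNReal.ofReal_natCast]

lemma op_bound (N : ℕ) (hN : 0 < N) (a : Fin N → Fin N → ℂ) :
    (∑' l2 : Fin N, ⨆ l1 : Fin N,
        (‖∑' m : Fin N × Fin N, Kmat N l1 l2 m.1 m.2 * a m.1 m.2‖₊ : ℝ≥0∞)) ≤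
      (N : ℝ≥0∞) * ∑' l2 : Fin N, ⨆ l1 : Fin N, (‖a l1 l2‖₊ : ℝ≥0∞) := by
  haveI : Nonempty (Fin N) := Fin.pos_iff_nonempty.mp hN
  set S : ℝ≥0∞ := ∑' l2 : Fin N, ⨆ l1 : Fin N, (‖a l1 l2‖₊ : ℝ≥0∞) with hS
  have hSne : S ≠ ∞ := by
    rw [hS, tsum_fintype]
    refine (ENNReal.sum_lt_top.mpr fun l2 _ => ?_).ne
    have hle : (⨆ l1 : Fin N, (‖a l1 l2‖₊ : ℝ≥0∞)) ≤ ∑ l1 : Fin N, (‖a l1 l2‖₊ : ℝ≥0∞) :=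
      iSup_le fun l1 => Finset.single_le_sum
        (f := fun l1 : Fin N => (‖a l1 l2‖₊ : ℝ≥0∞)) (fun _ _ => zero_le) (Finset.mem_univ l1)
    exact lt_of_le_of_lt hle (ENNReal.sum_lt_top.mpr fun _ _ => ENNReal.coe_lt_top)
  set b : Fin N → ℂ := fun m1 => ∑ m2 : Fin N, a m1 m2 with hb
  have hred : ∀ l1 l2 : Fin N,
      (∑' m : Fin N × Fin N, Kmat N l1 l2 m.1 m.2 * a m.1 m.2) =
        ∑ m1 : Fin N, Fmat N l2 m1 * b m1 := by
    intro l1 l2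
    rw [tsum_fintype, Fintype.sum_prod_type]
    exact Finset.sum_congr rfl fun m1 _ => by
      rw [hb]; simp only [Kmat]; rw [Finset.mul_sum]
  have hbM : ∀ m1, ‖b m1‖ ≤ S.toReal := by
    intro m1
    have h1 : (‖b m1‖₊ : ℝ≥0∞) ≤ S := by
      rw [hb, hS, tsum_fintype]
      calc (‖∑ m2 : Fin N, a m1 m2‖₊ : ℝ≥0∞)
          ≤ ∑ m2 : Fin N, (‖a m1 m2‖₊ : ℝ≥0∞) := by
            rw [← ENNReal.coe_finset_sum]
            exact_mod_cast nnnorm_sum_le Finset.univ fun m2 => a m1 m2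
        _ ≤ ∑ m2 : Fin N, ⨆ l1 : Fin N, (‖a l1 m2‖₊ : ℝ≥0∞) :=
            Finset.sum_le_sum fun m2 _ =>
              le_iSup (fun l1 : Fin N => (‖a l1 m2‖₊ : ℝ≥0∞)) m1
    have h2 := ENNReal.toReal_mono hSne h1
    rwa [ENNReal.coe_toReal, coe_nnnorm] at h2
  calc (∑' l2 : Fin N, ⨆ l1 : Fin N,
        (‖∑' m : Fin N × Fin N, Kmat N l1 l2 m.1 m.2 * a m.1 m.2‖₊ : ℝ≥0∞))
      = ∑ l2 : Fin N, ENNReal.ofReal ‖∑ m1 : Fin N, Fmat N l2 m1 * b m1‖ := by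
        rw [tsum_fintype]
        refine Finset.sum_congr rfl fun l2 _ => ?_
        simp only [hred, iSup_const, ← ENNReal.ofReal_coe_nnreal, coe_nnnorm]
    _ = ENNReal.ofReal (∑ l2 : Fin N, ‖∑ m1 : Fin N, Fmat N l2 m1 * b m1‖) :=
        (ENNReal.ofReal_sum_of_nonneg fun _ _ => norm_nonneg _).symm
    _ ≤ ENNReal.ofReal ((N : ℝ) * S.toReal) :=
        ENNReal.ofReal_le_ofReal (l1_bound N hN b S.toReal hbM)
    _ = ENNReal.ofReal (N : ℝ) * ENNReal.ofReal S.toReal :=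
        ENNReal.ofReal_mul (Nat.cast_nonneg N)
    _ = (N : ℝ≥0∞) * S := by rw [ENNReal.ofReal_natCast, ENNReal.ofReal_toReal hSne]

/-- **Sharpness of the Schur-type bound** (Remark 4.2 of the paper).
For `J = {0,…,N-1}` and the kernel `K_{λ₁,λ₂,μ₁,μ₂} = F_{λ₂,μ₁}` given by the Fourier
matrix, one has `‖K ∘ c̃₃‖_{ℓ^{1,∞,1,∞}} = ‖F‖_{ℓ¹} = N^{3/2}`, while the associated
operator `A` satisfies `‖A‖_{ℓ^{∞,1} → ℓ^{∞,1}} ≤ N`.  Consequently there is no finite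
constant `C`, independent of the kernel, with
`‖K ∘ c̃₃‖_{ℓ^{1,∞,1,∞}} ≤ C ‖A‖_{ℓ^{∞,1} → ℓ^{∞,1}}` for all kernels. -/
theorem fourier_kernel_counterexample (N : ℕ) (hN : 0 < N) :
    ((⨆ j4 : Fin N, ∑' j3 : Fin N, ⨆ j2 : Fin N, ∑' j1 : Fin N,
        (‖Kmat N j2 j3 j1 j4‖₊ : ℝ≥0∞)) =
      ∑' jk : Fin N × Fin N, (‖Fmat N jk.1 jk.2‖₊ : ℝ≥0∞)) ∧
    ((⨆ j4 : Fin N, ∑' j3 : Fin N, ⨆ j2 : Fin N, ∑' j1 : Fin N,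
        (‖Kmat N j2 j3 j1 j4‖₊ : ℝ≥0∞)) =
      ENNReal.ofReal ((N : ℝ) ^ (3 / 2 : ℝ))) ∧
    (∀ a : Fin N → Fin N → ℂ,
      (∑' l2 : Fin N, ⨆ l1 : Fin N,
          (‖∑' m : Fin N × Fin N, Kmat N l1 l2 m.1 m.2 * a m.1 m.2‖₊ : ℝ≥0∞)) ≤
        (N : ℝ≥0∞) * ∑' l2 : Fin N, ⨆ l1 : Fin N, (‖a l1 l2‖₊ : ℝ≥0∞)) ∧
    ¬ ∃ C : ℝ≥0∞, C ≠ ∞ ∧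
        ∀ (J : Type) (_ : Countable J) (K : J → J → J → J → ℂ),
          (⨆ j4 : J, ∑' j3 : J, ⨆ j2 : J, ∑' j1 : J, (‖K j2 j3 j1 j4‖₊ : ℝ≥0∞)) ≤
            C * ⨆ (a : J → J → ℂ)
                (_ : (∑' l2 : J, ⨆ l1 : J, (‖a l1 l2‖₊ : ℝ≥0∞)) ≤ 1),
                ∑' l2 : J, ⨆ l1 : J,
                  (‖∑' m : J × J, K l1 l2 m.1 m.2 * a m.1 m.2‖₊ : ℝ≥0∞) := by
  refine ⟨(lhs_eval N hN).trans (rhs1_eval N hN).symm,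
    (lhs_eval N hN).trans (pow_eval N hN), fun a => op_bound N hN a, ?_⟩
  rintro ⟨C, hC, h⟩
  set n : ℕ := ⌈C.toReal⌉₊ + 1 with hn
  have hn0 : 0 < n := Nat.succ_pos _
  set M : ℕ := n ^ 2 with hMdef
  have hM : 0 < M := pow_pos hn0 2
  have h1 := h (Fin M) inferInstance (Kmat M)
  rw [lhs_eval M hM] at h1
  have hsup : (⨆ (a : Fin M → Fin M → ℂ)
      (_ : (∑' l2 : Fin M, ⨆ l1 : Fin M, (‖a l1 l2‖₊ : ℝ≥0∞)) ≤ 1),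
      ∑' l2 : Fin M, ⨆ l1 : Fin M,
        (‖∑' m : Fin M × Fin M, Kmat M l1 l2 m.1 m.2 * a m.1 m.2‖₊ : ℝ≥0∞)) ≤ (M : ℝ≥0∞) := by
    refine iSup_le fun a => iSup_le fun ha => ?_
    refine (op_bound M hM a).trans ?_
    calc (M : ℝ≥0∞) * ∑' l2 : Fin M, ⨆ l1 : Fin M, (‖a l1 l2‖₊ : ℝ≥0∞)
        ≤ (M : ℝ≥0∞) * 1 := mul_le_mul_right ha _
      _ = (M : ℝ≥0∞) := mul_one _
  have hsqrt : ENNReal.ofReal (Real.sqrt M)⁻¹ = ((n : ℝ≥0∞))⁻¹ := by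
    have : Real.sqrt (M : ℝ) = (n : ℝ) := by
      rw [hMdef]; push_cast; exact Real.sqrt_sq (by positivity)
    rw [this, ENNReal.ofReal_inv_of_pos (by exact_mod_cast hn0), ENNReal.ofReal_natCast]
  have hnne : (n : ℝ≥0∞) ≠ 0 := by exact_mod_cast hn0.ne'
  have hMcast : (M : ℝ≥0∞) = (n : ℝ≥0∞) * (n : ℝ≥0∞) := by
    rw [hMdef]; push_cast; ring
  have hkey : (n : ℝ≥0∞) * (M : ℝ≥0∞) ≤ C * (M : ℝ≥0∞) := by
    calc (n : ℝ≥0∞) * (M : ℝ≥0∞)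
        = (M : ℝ≥0∞) * ((M : ℝ≥0∞) * ENNReal.ofReal (Real.sqrt M)⁻¹) := by
          rw [hsqrt, hMcast]
          rw [show (n : ℝ≥0∞) * (n : ℝ≥0∞) * ((n : ℝ≥0∞) * (n : ℝ≥0∞) * (n : ℝ≥0∞)⁻¹) =
            (n : ℝ≥0∞) * (n : ℝ≥0∞) * (n : ℝ≥0∞) * ((n : ℝ≥0∞) * (n : ℝ≥0∞)⁻¹) by ring,
            ENNReal.mul_inv_cancel hnne (ENNReal.natCast_ne_top n), mul_one]
          ring
      _ ≤ C * (M : ℝ≥0∞) := h1.trans (mul_le_mul_right hsup C)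
  have hnC : (n : ℝ≥0∞) ≤ C :=
    (ENNReal.mul_le_mul_iff_left (by exact_mod_cast hM.ne') (ENNReal.natCast_ne_top M)).mp hkey
  have hfin : (n : ℝ) ≤ C.toReal := by
    have := ENNReal.toReal_mono hC hnC
    simpa using this
  have : C.toReal ≤ (⌈C.toReal⌉₊ : ℝ) := Nat.le_ceil _
  have : ((⌈C.toReal⌉₊ + 1 : ℕ) : ℝ) ≤ C.toReal := by rw [← hn]; exact hfin
  push_cast at this
  linarith [Nat.le_ceil C.toReal]

end
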